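/- Let r ≥ 1 and let k_1, …, k_r ≥ 1 be positive integers with k = k_1 + … + k_r. Then the product of binomial coefficients ∏_{j=1}^{r} C(k − 1 − (k_1 + … + k_{j−1}), k_j − 1) equals k! / ( ∏_{j=1}^{r} (k_j + k_{j+1} + … + k_r) · ∏_{j=1}^{r} (k_j − 1)! ). -/

import Mathlib

lemma aux_ordering (r : ℕ) (k : ℕ → ℕ) (hk : ∀ j, 1 ≤ k j) :
    (∏ j ∈ Finset.range r,
        (Nat.choose ((∑ i ∈ Finset.range r, k i) - 1 - ∑ i ∈ Finset.range j, k i) (k j - 1) : ℝ)) =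
      (Nat.factorial (∑ i ∈ Finset.range r, k i) : ℝ) /
        ((∏ j ∈ Finset.range r, ((∑ i ∈ Finset.Ico j r, k i : ℕ) : ℝ)) *
          ∏ j ∈ Finset.range r, (Nat.factorial (k j - 1) : ℝ)) := by
  induction r generalizing k with
  | zero => simp
  | succ r ih =>
    set k' : ℕ → ℕ := fun i => k (i + 1) with hk'def
    have hk' : ∀ j, 1 ≤ k' j := fun j => hk _
    have hK : ∑ i ∈ Finset.range (r + 1), k i
        = (∑ i ∈ Finset.range r, k' i) + k 0 := Finset.sum_range_succ' k r
    set K' : ℕ := ∑ i ∈ Finset.range r, k' i with hK'def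
    -- rewrite LHS
    have hL : (∏ j ∈ Finset.range (r + 1),
        (Nat.choose ((∑ i ∈ Finset.range (r + 1), k i) - 1 - ∑ i ∈ Finset.range j, k i)
          (k j - 1) : ℝ)) =
        (∏ j ∈ Finset.range r,
          (Nat.choose (K' - 1 - ∑ i ∈ Finset.range j, k' i) (k' j - 1) : ℝ)) *
        (Nat.choose ((K' + k 0) - 1) (k 0 - 1) : ℝ) := by
      rw [Finset.prod_range_succ']
      congr 1
      · apply Finset.prod_congr rfl
        intro j hj
        congr 2
        have h1 : ∑ i ∈ Finset.range (j + 1), k i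
            = (∑ i ∈ Finset.range j, k' i) + k 0 := Finset.sum_range_succ' k j
        rw [hK, h1]
        omega
      · rw [hK]
        simp
    -- suffix sums shift
    have hS : ∀ j, ∑ i ∈ Finset.Ico (j + 1) (r + 1), k i = ∑ i ∈ Finset.Ico j r, k' i := by
      intro j
      rw [Finset.sum_Ico_eq_sum_range, Finset.sum_Ico_eq_sum_range]
      simp only [Nat.add_sub_add_right]
      apply Finset.sum_congr rfl
      intro i _
      simp [hk'def]
      ring_nf
    have hD1 : (∏ j ∈ Finset.range (r + 1), ((∑ i ∈ Finset.Ico j (r + 1), k i : ℕ) : ℝ)) =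
        (∏ j ∈ Finset.range r, ((∑ i ∈ Finset.Ico j r, k' i : ℕ) : ℝ)) * ((K' + k 0 : ℕ) : ℝ) := by
      rw [Finset.prod_range_succ']
      congr 1
      · exact Finset.prod_congr rfl fun j _ => by rw [hS j]
      · rw [← hK]
        congr 1
        rw [Finset.range_eq_Ico]
    have hD2 : (∏ j ∈ Finset.range (r + 1), (Nat.factorial (k j - 1) : ℝ)) =
        (∏ j ∈ Finset.range r, (Nat.factorial (k' j - 1) : ℝ)) *
          (Nat.factorial (k 0 - 1) : ℝ) := Finset.prod_range_succ' _ r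
    rw [hL, hK, hD1, hD2, ih k' hk']
    -- now pure real arithmetic
    have hk0 : 1 ≤ k 0 := hk 0
    have hchoose : (Nat.choose ((K' + k 0) - 1) (k 0 - 1) : ℝ) =
        (Nat.factorial ((K' + k 0) - 1) : ℝ) /
          ((Nat.factorial (k 0 - 1) : ℝ) * (Nat.factorial K' : ℝ)) := by
      have hle : k 0 - 1 ≤ (K' + k 0) - 1 := by omega
      rw [Nat.cast_choose ℝ hle]
      have h2 : (K' + k 0) - 1 - (k 0 - 1) = K' := by omega
      rw [h2]
    have hfact : (Nat.factorial (K' + k 0) : ℝ) =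
        ((K' + k 0 : ℕ) : ℝ) * (Nat.factorial ((K' + k 0) - 1) : ℝ) := by
      have h := Nat.mul_factorial_pred (n := K' + k 0) (by omega)
      exact_mod_cast h.symm
    have hD1ne : (∏ j ∈ Finset.range r, ((∑ i ∈ Finset.Ico j r, k' i : ℕ) : ℝ)) ≠ 0 := by
      apply Finset.prod_ne_zero_iff.mpr
      intro j hj
      have : 1 ≤ ∑ i ∈ Finset.Ico j r, k' i := by
        calc 1 ≤ k' j := hk' j
        _ ≤ _ := Finset.single_le_sum (f := k') (fun i _ => Nat.zero_le _)
            (Finset.mem_Ico.mpr ⟨le_refl j, Finset.mem_range.mp hj⟩)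
      positivity
    have hD2ne : (∏ j ∈ Finset.range r, (Nat.factorial (k' j - 1) : ℝ)) ≠ 0 :=
      Finset.prod_ne_zero_iff.mpr fun j _ => by positivity
    have hKne : ((K' + k 0 : ℕ) : ℝ) ≠ 0 := by positivity
    have hf1 : (Nat.factorial (k 0 - 1) : ℝ) ≠ 0 := by positivity
    have hf2 : (Nat.factorial K' : ℝ) ≠ 0 := by positivity
    rw [hchoose, hfact, div_mul_div_comm]
    rw [div_eq_div_iff
      (mul_ne_zero (mul_ne_zero hD1ne hD2ne) (mul_ne_zero hf1 hf2))
      (mul_ne_zero (mul_ne_zero hD1ne hKne) (mul_ne_zero hD2ne hf1))]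
    ring

/-- The ordering-factor identity: for positive integers `k 0, …, k (r-1)` summing to `K`,
the product of binomial coefficients `∏_j C(K - 1 - (k 0 + … + k (j-1)), k j - 1)` equals
`K! / (∏_j (k j + k (j+1) + … + k (r-1)) · ∏_j (k j - 1)!)`. -/
theorem stmt_0 (r : ℕ) (hr : 1 ≤ r) (k : Fin r → ℕ) (hk : ∀ j, 1 ≤ k j) :
    (∏ j : Fin r,
        (Nat.choose ((∑ i : Fin r, k i) - 1 - ∑ i ∈ Finset.Iio j, k i) (k j - 1) : ℝ)) =
      (Nat.factorial (∑ i : Fin r, k i) : ℝ) /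
        ((∏ j : Fin r, ((∑ i ∈ Finset.Ici j, k i : ℕ) : ℝ)) *
          ∏ j : Fin r, (Nat.factorial (k j - 1) : ℝ)) := by
  set k' : ℕ → ℕ := fun i => if h : i < r then k ⟨i, h⟩ else 1 with hk'def
  have hk' : ∀ j, 1 ≤ k' j := by
    intro j
    simp only [hk'def]
    split
    · exact hk _
    · exact le_refl 1
  have hval : ∀ j : Fin r, k j = k' j.val := by
    intro j
    rw [hk'def]
    simp only []
    rw [dif_pos j.isLt, Fin.eta]
  have hsum : ∑ i : Fin r, k i = ∑ i ∈ Finset.range r, k' i := by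
    rw [← Fin.sum_univ_eq_sum_range]
    exact Finset.sum_congr rfl fun i _ => hval i
  have hIio : ∀ j : Fin r, ∑ i ∈ Finset.Iio j, k i = ∑ i ∈ Finset.range j.val, k' i := by
    intro j
    have h : ∑ i ∈ Finset.range (j : ℕ), k' i
        = ∑ i ∈ (Finset.Iio j).map Fin.valEmbedding, k' i := by
      rw [Fin.map_valEmbedding_Iio, Nat.Iio_eq_range]
    rw [h, Finset.sum_map]
    exact Finset.sum_congr rfl fun i _ => hval i
  have hIci : ∀ j : Fin r, ∑ i ∈ Finset.Ici j, k i = ∑ i ∈ Finset.Ico j.val r, k' i := by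
    intro j
    have h1 : Finset.Ico (j : ℕ) r = Finset.Icc (j : ℕ) (r - 1) := by
      rw [← Finset.Ico_add_one_right_eq_Icc]
      congr 1
      omega
    have h2 : ∑ i ∈ Finset.Icc (j : ℕ) (r - 1), k' i
        = ∑ i ∈ (Finset.Ici j).map Fin.valEmbedding, k' i := by
      rw [Fin.map_valEmbedding_Ici, h1]
    rw [h1, h2, Finset.sum_map]
    exact Finset.sum_congr rfl fun i _ => hval i
  have := aux_ordering r k' hk'
  rw [← Fin.prod_univ_eq_prod_range
        (fun j => (Nat.choose ((∑ i ∈ Finset.range r, k' i) - 1 - ∑ i ∈ Finset.range j, k' i)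
          (k' j - 1) : ℝ)) r,
      ← Fin.prod_univ_eq_prod_range
        (fun j => ((∑ i ∈ Finset.Ico j r, k' i : ℕ) : ℝ)) r,
      ← Fin.prod_univ_eq_prod_range (fun j => (Nat.factorial (k' j - 1) : ℝ)) r] at this
  rw [hsum]
  rw [show (∏ j : Fin r,
        (Nat.choose ((∑ i ∈ Finset.range r, k' i) - 1 - ∑ i ∈ Finset.Iio j, k i) (k j - 1) : ℝ)) =
      ∏ j : Fin r,
        (Nat.choose ((∑ i ∈ Finset.range r, k' i) - 1 - ∑ i ∈ Finset.range (j : ℕ), k' i)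
          (k' (j : ℕ) - 1) : ℝ) from
    Finset.prod_congr rfl fun j _ => by rw [hIio j, hval j]]
  rw [show (∏ j : Fin r, ((∑ i ∈ Finset.Ici j, k i : ℕ) : ℝ)) =
      ∏ j : Fin r, ((∑ i ∈ Finset.Ico (j : ℕ) r, k' i : ℕ) : ℝ) from
    Finset.prod_congr rfl fun j _ => by rw [hIci j]]
  rw [show (∏ j : Fin r, (Nat.factorial (k j - 1) : ℝ)) =
      ∏ j : Fin r, (Nat.factorial (k' (j : ℕ) - 1) : ℝ) from
    Finset.prod_congr rfl fun j _ => by rw [hval j]]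
  exact this
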